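/- arXiv:2212.11528 — 3 statements merged into one kernel-verified Lean document; each statement's English description precedes it below -/
import Mathlib

section
/- Let u be a nonnegative differentiable function on [0,∞) satisfying u'(t) ≤ c(t)u(t) + a(t)u(t)^α, where 0 ≤ α < 1 and c, a are continuous nonnegative functions. Then u(t) ≤ [u(0)^{1-α}·exp((1-α)∫₀ᵗ c(s)ds) + ∫₀ᵗ (1-α)a(s)·exp((1-α)∫ₛᵗ c(r)dr) ds]^{1/(1-α)}. -/
open MeasureTheory intervalIntegral

theorem stmt_2 (u u' c a : ℝ → ℝ) (α : ℝ) (hα0 : 0 ≤ α) (hα1 : α < 1)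
    (hu_nonneg : ∀ t ≥ (0:ℝ), 0 ≤ u t)
    (hderiv : ∀ t ≥ (0:ℝ), HasDerivAt u (u' t) t)
    (hc_cont : ContinuousOn c (Set.Ici 0)) (hc_nonneg : ∀ t ≥ (0:ℝ), 0 ≤ c t)
    (ha_cont : ContinuousOn a (Set.Ici 0)) (ha_nonneg : ∀ t ≥ (0:ℝ), 0 ≤ a t)
    (h : ∀ t ≥ (0:ℝ), u' t ≤ c t * u t + a t * u t ^ α) :
    ∀ t ≥ (0:ℝ),
      u t ≤ (u 0 ^ (1 - α) * Real.exp ((1 - α) * ∫ s in (0:ℝ)..t, c s)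
          + ∫ s in (0:ℝ)..t, (1 - α) * a s * Real.exp ((1 - α) * ∫ r in s..t, c r))
        ^ (1 / (1 - α)) := by
  intro T hT
  set β : ℝ := 1 - α with hβ
  have hβ0 : 0 < β := by simp [hβ]; linarith
  have hβne : β ≠ 0 := ne_of_gt hβ0
  set p : ℝ := 1 / β with hp
  have hp0 : 0 < p := by positivity
  have hpβ : p * β = 1 := by rw [hp]; field_simp
  have hp1 : 1 ≤ p := by
    rw [hp, le_div_iff₀ hβ0]
    simp [hβ]; linarith
  have hα' : α = 1 - β := by rw [hβ]; ring
  have hpα : p * α = p - 1 := by rw [hα']; linear_combination -hpβ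
  -- extended coefficients
  set cb : ℝ → ℝ := fun t => c (max t 0) with hcbdef
  set ab : ℝ → ℝ := fun t => a (max t 0) with habdef
  have hmax : ∀ t : ℝ, max t 0 ∈ Set.Ici (0:ℝ) := fun t => le_max_right t 0
  have hcb_cont : Continuous cb :=
    hc_cont.comp_continuous (continuous_id.max continuous_const) hmax
  have hab_cont : Continuous ab :=
    ha_cont.comp_continuous (continuous_id.max continuous_const) hmax
  have hcb_nonneg : ∀ t, 0 ≤ cb t := fun t => hc_nonneg _ (hmax t)
  have hab_nonneg : ∀ t, 0 ≤ ab t := fun t => ha_nonneg _ (hmax t)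
  have hcb_eq : ∀ t, 0 ≤ t → cb t = c t := fun t ht => by
    simp only [hcbdef, max_eq_left ht]
  have hab_eq : ∀ t, 0 ≤ t → ab t = a t := fun t ht => by
    simp only [habdef, max_eq_left ht]
  -- primitive of cb
  set C : ℝ → ℝ := fun t => ∫ s in (0:ℝ)..t, cb s with hCdef
  have hC : ∀ t, HasDerivAt C (cb t) t := fun t =>
    intervalIntegral.integral_hasDerivAt_right (hcb_cont.intervalIntegrable _ _)
      (hcb_cont.stronglyMeasurableAtFilter _ _) hcb_cont.continuousAt
  have hC_cont : Continuous C := continuous_iff_continuousAt.2 fun t => (hC t).continuousAt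
  have hC0 : C 0 = 0 := intervalIntegral.integral_same
  -- the auxiliary integral
  set g : ℝ → ℝ := fun t => β * ab t * Real.exp (-(β * C t)) with hgdef
  have hg_cont : Continuous g := by
    apply Continuous.mul (continuous_const.mul hab_cont)
    exact Real.continuous_exp.comp ((continuous_const.mul hC_cont).neg)
  have hg_nonneg : ∀ t, 0 ≤ g t := fun t =>
    mul_nonneg (mul_nonneg hβ0.le (hab_nonneg t)) (Real.exp_pos _).le
  set G : ℝ → ℝ := fun t => ∫ s in (0:ℝ)..t, g s with hGdef
  have hG : ∀ t, HasDerivAt G (g t) t := fun t =>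
    intervalIntegral.integral_hasDerivAt_right (hg_cont.intervalIntegrable _ _)
      (hg_cont.stronglyMeasurableAtFilter _ _) hg_cont.continuousAt
  have hG_nonneg : ∀ t, 0 ≤ t → 0 ≤ G t := fun t ht =>
    intervalIntegral.integral_nonneg ht (fun s _ => hg_nonneg s)
  have hG0 : G 0 = 0 := intervalIntegral.integral_same
  have hu0 : 0 ≤ u 0 ^ β := Real.rpow_nonneg (hu_nonneg 0 le_rfl) β
  -- the key estimate for every ε > 0
  have key : ∀ ε : ℝ, 0 < ε →
      u T ≤ (Real.exp (β * C T) * (u 0 ^ β + ε + G T)) ^ p * Real.exp (ε * T) := by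
    intro ε hε
    set K : ℝ := u 0 ^ β + ε with hK
    have hK0 : 0 < K := by rw [hK]; linarith
    set W : ℝ → ℝ := fun t => Real.exp (β * C t) * (K + G t) with hWdef
    set W' : ℝ → ℝ := fun t => β * (cb t * W t + ab t) with hW'def
    have hW : ∀ t, HasDerivAt W (W' t) t := by
      intro t
      have h1 : HasDerivAt (fun t => Real.exp (β * C t))
          (Real.exp (β * C t) * (β * cb t)) t := ((hC t).const_mul β).exp
      have h2 : HasDerivAt W (Real.exp (β * C t) * (β * cb t) * (K + G t) + Real.exp (β * C t) * g t) t :=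
        h1.fun_mul ((hG t).const_add K)
      convert h2 using 1
      have hx : Real.exp (β * C t) * Real.exp (-(β * C t)) = 1 := by
        rw [← Real.exp_add]; simp
      show β * (cb t * (Real.exp (β * C t) * (K + G t)) + ab t) = Real.exp (β * C t) * (β * cb t) * (K + G t) + Real.exp (β * C t) * (β * ab t * Real.exp (-(β * C t)))
      linear_combination (-(β * ab t)) * hx
    have hWpos : ∀ x, 0 ≤ x → 0 < W x := fun x hx =>
      mul_pos (Real.exp_pos _) (by have := hG_nonneg x hx; linarith)
    set B : ℝ → ℝ := fun t => W t ^ p with hBdef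
    set D : ℝ → ℝ := fun t => B t * Real.exp (ε * t) with hDdef
    have hB : ∀ t, HasDerivAt B (W' t * p * W t ^ (p - 1)) t := fun t =>
      (hW t).rpow_const (Or.inr hp1)
    have hE : ∀ t : ℝ, HasDerivAt (fun t => Real.exp (ε * t)) (Real.exp (ε * t) * (ε * 1)) t :=
      fun t => ((hasDerivAt_id t).const_mul ε).exp
    set D' : ℝ → ℝ := fun t =>
      W' t * p * W t ^ (p - 1) * Real.exp (ε * t) + B t * (Real.exp (ε * t) * (ε * 1))
        with hD'def
    have hD : ∀ t, HasDerivAt D (D' t) t := fun t => (hB t).mul (hE t)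
    -- initial condition
    have hinit : u 0 ≤ D 0 := by
      have h1 : D 0 = K ^ p := by
        simp [hDdef, hBdef, hWdef, hC0, hG0]
      have h2 : u 0 = (u 0 ^ β) ^ p := by
        rw [← Real.rpow_mul (hu_nonneg 0 le_rfl), mul_comm β p, hpβ, Real.rpow_one]
      rw [h1, h2]
      exact Real.rpow_le_rpow hu0 (by rw [hK]; linarith) hp0.le
    have hu_cont : ContinuousOn u (Set.Icc 0 T) := fun x hx =>
      ((hderiv x hx.1).continuousAt).continuousWithinAt
    have hu_deriv : ∀ x ∈ Set.Ico (0:ℝ) T, HasDerivWithinAt u (u' x) (Set.Ici x) x :=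
      fun x hx => (hderiv x hx.1).hasDerivWithinAt
    have bound : ∀ x ∈ Set.Ico (0:ℝ) T, u x = D x → u' x < D' x := by
      intro x hx heq
      have hx0 : 0 ≤ x := hx.1
      have hWx : 0 < W x := hWpos x hx0
      have hBx : 0 < B x := Real.rpow_pos_of_pos hWx p
      have hEx : 0 < Real.exp (ε * x) := Real.exp_pos _
      -- rewrite u x ^ α
      have hBα : B x ^ α = W x ^ (p - 1) := by
        rw [hBdef, ← Real.rpow_mul hWx.le, hpα]
      have huxα : u x ^ α = W x ^ (p - 1) * Real.exp (ε * x * α) := by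
        rw [heq, hDdef]
        rw [Real.mul_rpow hBx.le hEx.le, hBα, ← Real.exp_mul]
      have hWp : W x ^ (p - 1) * W x = B x := by
        rw [hBdef, ← Real.rpow_add_one hWx.ne' (p - 1), sub_add_cancel]
      have hexpmono : Real.exp (ε * x * α) ≤ Real.exp (ε * x) := by
        apply Real.exp_le_exp.2
        have h1 : 0 ≤ ε * x * (1 - α) := mul_nonneg (mul_nonneg hε.le hx0) (by linarith)
        nlinarith [h1]
      have hb := h x hx0
      rw [← hcb_eq x hx0, ← hab_eq x hx0] at hb
      have hux : u x = B x * Real.exp (ε * x) := heq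
      calc u' x ≤ cb x * u x + ab x * u x ^ α := hb
        _ = cb x * B x * Real.exp (ε * x)
            + ab x * (W x ^ (p - 1) * Real.exp (ε * x * α)) := by
            rw [huxα, hux]; ring
        _ ≤ cb x * B x * Real.exp (ε * x)
            + ab x * (W x ^ (p - 1) * Real.exp (ε * x)) := by
            have hW1 : 0 ≤ W x ^ (p - 1) := Real.rpow_nonneg hWx.le _
            have := mul_le_mul_of_nonneg_left hexpmono hW1
            nlinarith [hab_nonneg x]
        _ < D' x := by
            have hD'x : D' x = (cb x * B x + ab x * W x ^ (p - 1)) * Real.exp (ε * x)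
                + ε * B x * Real.exp (ε * x) := by
              simp only [hD'def, hW'def]
              have e1 : W' x * p * W x ^ (p - 1)
                  = cb x * B x + ab x * W x ^ (p - 1) := by
                simp only [hW'def]
                have : β * (cb x * W x + ab x) * p * W x ^ (p - 1)
                    = (p * β) * (cb x * (W x ^ (p - 1) * W x) + ab x * W x ^ (p - 1)) := by
                  ring
                rw [this, hpβ, hWp]; ring
              rw [e1]; ring
            rw [hD'x]
            have : 0 < ε * B x * Real.exp (ε * x) := by positivity
            linarith
    have := image_le_of_deriv_right_lt_deriv_boundary hu_cont hu_deriv hinit hD bound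
      (Set.right_mem_Icc.2 hT)
    calc u T ≤ D T := this
      _ = (Real.exp (β * C T) * (u 0 ^ β + ε + G T)) ^ p * Real.exp (ε * T) := by
          simp only [hDdef, hBdef, hWdef, hK]
  -- pass to the limit ε → 0⁺
  have hlim : Filter.Tendsto
      (fun ε : ℝ => (Real.exp (β * C T) * (u 0 ^ β + ε + G T)) ^ p * Real.exp (ε * T))
      (nhdsWithin 0 (Set.Ioi 0))
      (nhds ((Real.exp (β * C T) * (u 0 ^ β + 0 + G T)) ^ p * Real.exp (0 * T))) := by
    apply Filter.Tendsto.mono_left _ nhdsWithin_le_nhds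
    apply ContinuousAt.tendsto
    apply ContinuousAt.mul
    · exact (ContinuousAt.mul continuousAt_const
        ((continuousAt_const.add continuousAt_id).add continuousAt_const)).rpow_const
        (Or.inr hp0.le)
    · exact (Real.continuous_exp.comp (continuous_id.mul continuous_const)).continuousAt
  have hmain : u T ≤ (Real.exp (β * C T) * (u 0 ^ β + 0 + G T)) ^ p * Real.exp (0 * T) :=
    ge_of_tendsto hlim (eventually_mem_nhdsWithin.mono fun ε hε => key ε hε)
  rw [zero_mul, Real.exp_zero, mul_one, add_zero] at hmain
  -- identify the limit with the stated bound
  have hCc : C T = ∫ s in (0:ℝ)..T, c s := by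
    apply intervalIntegral.integral_congr
    intro s hs
    rw [Set.uIcc_of_le hT] at hs
    exact hcb_eq s hs.1
  have hbase : Real.exp (β * C T) * (u 0 ^ β + G T)
      = u 0 ^ β * Real.exp (β * ∫ s in (0:ℝ)..T, c s)
        + ∫ s in (0:ℝ)..T, β * a s * Real.exp (β * ∫ r in s..T, c r) := by
    have hpull : Real.exp (β * C T) * G T
        = ∫ s in (0:ℝ)..T, Real.exp (β * C T) * g s := by
      rw [hGdef, ← intervalIntegral.integral_const_mul]
    have hcongr : (∫ s in (0:ℝ)..T, Real.exp (β * C T) * g s)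
        = ∫ s in (0:ℝ)..T, β * a s * Real.exp (β * ∫ r in s..T, c r) := by
      apply intervalIntegral.integral_congr
      intro s hs
      rw [Set.uIcc_of_le hT] at hs
      have hs0 : 0 ≤ s := hs.1
      have hsT : s ≤ T := hs.2
      have hsub : (∫ r in s..T, cb r) = C T - C s :=
        (intervalIntegral.integral_interval_sub_left
          (hcb_cont.intervalIntegrable 0 T) (hcb_cont.intervalIntegrable 0 s)).symm
      have hsub2 : (∫ r in s..T, cb r) = ∫ r in s..T, c r := by
        apply intervalIntegral.integral_congr
        intro r hr
        rw [Set.uIcc_of_le hsT] at hr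
        exact hcb_eq r (le_trans hs0 hr.1)
      simp only [hgdef]
      rw [hab_eq s hs0, ← hsub2, hsub]
      have hxe : Real.exp (β * (C T - C s)) = Real.exp (β * C T) * Real.exp (-(β * C s)) := by
        rw [← Real.exp_add]; ring_nf
      rw [hxe]; ring
    rw [mul_add, hpull, hcongr, hCc]
    ring
  rw [hbase] at hmain
  exact hmain
end

section
/- Let u be a nonnegative differentiable function on [0,∞) satisfying u'(t) ≤ c(t)u(t) + a(t)u(t)^α + b(t)u(t)^β with 0 < α < β ≤ 1 and c, a, b continuous nonnegative. Then for all t ≥ 0, u'(t) ≤ (c(t)+b(t))u(t) + (a(t)+b(t))u(t)^α; consequently u(t) ≤ [u(0)^{1-α}·exp((1-α)∫₀ᵗ (c(s)+b(s))ds) + ∫₀ᵗ (1-α)(a(s)+b(s))·exp((1-α)∫ₛᵗ (c(r)+b(r))dr) ds]^{1/(1-α)}. -/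
open MeasureTheory intervalIntegral

theorem gronwall_lin_aux (v v' C A : ℝ → ℝ) (T : ℝ) (hT : 0 ≤ T)
    (hv : ∀ s ∈ Set.Icc (0:ℝ) T, HasDerivAt v (v' s) s)
    (hC : ContinuousOn C (Set.Icc 0 T)) (hA : ContinuousOn A (Set.Icc 0 T))
    (hle : ∀ s ∈ Set.Ioo (0:ℝ) T, v' s ≤ C s * v s + A s) :
    v T ≤ v 0 * Real.exp (∫ s in (0:ℝ)..T, C s)
      + ∫ s in (0:ℝ)..T, A s * Real.exp (∫ r in s..T, C r) := by
  have hIccuIcc : Set.uIcc (0:ℝ) T = Set.Icc 0 T := Set.uIcc_of_le hT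
  set I : ℝ → ℝ := fun s => ∫ r in (0:ℝ)..s, C r with hIdef
  set F : ℝ → ℝ := fun s => Real.exp (-I s) with hFdef
  set J : ℝ → ℝ := fun s => ∫ r in (0:ℝ)..s, A r * F r with hJdef
  -- integrability of C on subintervals
  have hCint : ∀ s ∈ Set.Icc (0:ℝ) T, ∀ t ∈ Set.Icc (0:ℝ) T, IntervalIntegrable C volume s t := by
    intro s hs t ht
    exact (hC.mono (by rw [← hIccuIcc]; exact Set.uIcc_subset_uIcc (hIccuIcc ▸ hs) (hIccuIcc ▸ ht))).intervalIntegrable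
  have h0mem : (0:ℝ) ∈ Set.Icc (0:ℝ) T := Set.left_mem_Icc.2 hT
  have hTmem : T ∈ Set.Icc (0:ℝ) T := Set.right_mem_Icc.2 hT
  -- continuity of I, F on Icc
  have hIcont : ContinuousOn I (Set.Icc 0 T) := by
    rw [← hIccuIcc]
    exact intervalIntegral.continuousOn_primitive_interval
      ((hC.mono (le_of_eq hIccuIcc)).integrableOn_compact (hIccuIcc ▸ isCompact_Icc))
  have hFcont : ContinuousOn F (Set.Icc 0 T) :=
    Real.continuous_exp.comp_continuousOn hIcont.neg
  have hAFcont : ContinuousOn (fun r => A r * F r) (Set.Icc 0 T) := hA.mul hFcont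
  have hAFint : IntervalIntegrable (fun r => A r * F r) volume 0 T :=
    (hAFcont.mono (le_of_eq hIccuIcc)).intervalIntegrable
  have hJcont : ContinuousOn J (Set.Icc 0 T) := by
    rw [← hIccuIcc]
    exact intervalIntegral.continuousOn_primitive_interval
      ((hAFcont.mono (le_of_eq hIccuIcc)).integrableOn_compact (hIccuIcc ▸ isCompact_Icc))
  have hvcont : ContinuousOn v (Set.Icc 0 T) := fun s hs =>
    (hv s hs).continuousAt.continuousWithinAt
  -- continuousAt facts on the open interval
  have hCca : ∀ s ∈ Set.Ioo (0:ℝ) T, ContinuousAt C s := fun s hs =>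
    hC.continuousAt (Icc_mem_nhds hs.1 hs.2)
  -- derivative of I
  have hI' : ∀ s ∈ Set.Ioo (0:ℝ) T, HasDerivAt I (C s) s := by
    intro s hs
    exact intervalIntegral.integral_hasDerivAt_right
      (hCint 0 h0mem s (Set.Ioo_subset_Icc_self hs))
      (ContinuousAt.stronglyMeasurableAtFilter isOpen_Ioo hCca s hs)
      (hCca s hs)
  have hF' : ∀ s ∈ Set.Ioo (0:ℝ) T, HasDerivAt F (F s * (-C s)) s := fun s hs =>
    ((hI' s hs).neg).exp
  have hFca : ∀ s ∈ Set.Ioo (0:ℝ) T, ContinuousAt F s := fun s hs =>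
    (hF' s hs).continuousAt
  have hAFca : ∀ s ∈ Set.Ioo (0:ℝ) T, ContinuousAt (fun r => A r * F r) s := fun s hs =>
    ((hA.continuousAt (Icc_mem_nhds hs.1 hs.2)).mul (hFca s hs))
  have hJ' : ∀ s ∈ Set.Ioo (0:ℝ) T, HasDerivAt J (A s * F s) s := by
    intro s hs
    have hsub : Set.uIcc (0:ℝ) s ⊆ Set.Icc (0:ℝ) T := by
      rw [← hIccuIcc]
      exact Set.uIcc_subset_uIcc (hIccuIcc ▸ h0mem) (hIccuIcc ▸ Set.Ioo_subset_Icc_self hs)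
    exact intervalIntegral.integral_hasDerivAt_right
      ((hAFcont.mono hsub).intervalIntegrable)
      (ContinuousAt.stronglyMeasurableAtFilter isOpen_Ioo hAFca s hs)
      (hAFca s hs)
  -- the auxiliary function
  set h : ℝ → ℝ := fun s => v s * F s - J s with hhdef
  have hh' : ∀ s ∈ Set.Ioo (0:ℝ) T, HasDerivAt h
      (v' s * F s + v s * (F s * (-C s)) - A s * F s) s := by
    intro s hs
    exact ((hv s (Set.Ioo_subset_Icc_self hs)).mul (hF' s hs)).sub (hJ' s hs)
  have hh'nonpos : ∀ s ∈ Set.Ioo (0:ℝ) T,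
      v' s * F s + v s * (F s * (-C s)) - A s * F s ≤ 0 := by
    intro s hs
    have hFpos : 0 < F s := Real.exp_pos _
    have := hle s hs
    nlinarith [hFpos, this]
  have hhcont : ContinuousOn h (Set.Icc 0 T) := (hvcont.mul hFcont).sub hJcont
  have hanti : AntitoneOn h (Set.Icc 0 T) := by
    apply antitoneOn_of_deriv_nonpos (convex_Icc 0 T) hhcont
    · intro s hs
      rw [interior_Icc] at hs
      exact (hh' s hs).differentiableAt.differentiableWithinAt
    · intro s hs
      rw [interior_Icc] at hs
      rw [(hh' s hs).deriv]
      exact hh'nonpos s hs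
  have hkey : h T ≤ h 0 := hanti h0mem hTmem hT
  have hF0 : F 0 = 1 := by simp [hFdef, hIdef]
  have hJ0 : J 0 = 0 := by simp [hJdef]
  have hFT : F T * Real.exp (I T) = 1 := by
    rw [hFdef]; rw [← Real.exp_add]; simp
  have hexp_pos : (0:ℝ) < Real.exp (I T) := Real.exp_pos _
  have hmain : v T ≤ (v 0 + J T) * Real.exp (I T) := by
    have h1 : v T * F T ≤ v 0 + J T := by
      have := hkey
      simp only [hhdef, hF0, hJ0] at this
      linarith
    calc v T = v T * F T * Real.exp (I T) := by rw [mul_assoc, hFT, mul_one]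
      _ ≤ (v 0 + J T) * Real.exp (I T) := by
          exact mul_le_mul_of_nonneg_right h1 hexp_pos.le
  -- rewrite RHS
  have hJT : J T * Real.exp (I T) = ∫ s in (0:ℝ)..T, A s * Real.exp (∫ r in s..T, C r) := by
    rw [hJdef]
    rw [← intervalIntegral.integral_mul_const]
    apply intervalIntegral.integral_congr
    intro s hs
    rw [hIccuIcc] at hs
    show A s * F s * Real.exp (I T) = A s * Real.exp (∫ r in s..T, C r)
    have hadd : I s + (∫ r in s..T, C r) = I T :=
      intervalIntegral.integral_add_adjacent_intervals (hCint 0 h0mem s hs) (hCint s hs T hTmem)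
    have : (∫ r in s..T, C r) = I T - I s := by linarith
    rw [this, hFdef]
    simp only []
    rw [mul_assoc, ← Real.exp_add]
    congr 2
    ring
  calc v T ≤ (v 0 + J T) * Real.exp (I T) := hmain
    _ = v 0 * Real.exp (I T) + J T * Real.exp (I T) := by ring
    _ = v 0 * Real.exp (∫ s in (0:ℝ)..T, C s)
        + ∫ s in (0:ℝ)..T, A s * Real.exp (∫ r in s..T, C r) := by rw [hJT]

theorem stmt_3 (u u' c a b : ℝ → ℝ) (α β : ℝ) (hα : 0 < α) (hαβ : α < β) (hβ : β ≤ 1)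
    (hu_nonneg : ∀ t ≥ (0:ℝ), 0 ≤ u t)
    (hderiv : ∀ t ≥ (0:ℝ), HasDerivAt u (u' t) t)
    (hc_cont : ContinuousOn c (Set.Ici 0)) (hc_nonneg : ∀ t ≥ (0:ℝ), 0 ≤ c t)
    (ha_cont : ContinuousOn a (Set.Ici 0)) (ha_nonneg : ∀ t ≥ (0:ℝ), 0 ≤ a t)
    (hb_cont : ContinuousOn b (Set.Ici 0)) (hb_nonneg : ∀ t ≥ (0:ℝ), 0 ≤ b t)
    (h : ∀ t ≥ (0:ℝ), u' t ≤ c t * u t + a t * u t ^ α + b t * u t ^ β) :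
    (∀ t ≥ (0:ℝ), u' t ≤ (c t + b t) * u t + (a t + b t) * u t ^ α) ∧
      ∀ t ≥ (0:ℝ),
        u t ≤ (u 0 ^ (1 - α) * Real.exp ((1 - α) * ∫ s in (0:ℝ)..t, (c s + b s))
            + ∫ s in (0:ℝ)..t, (1 - α) * (a s + b s)
                * Real.exp ((1 - α) * ∫ r in s..t, (c r + b r)))
          ^ (1 / (1 - α)) := by
  have hα1 : α < 1 := lt_of_lt_of_le hαβ hβ
  have part1 : ∀ t ≥ (0:ℝ), u' t ≤ (c t + b t) * u t + (a t + b t) * u t ^ α := by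
    intro t ht
    have hu := hu_nonneg t ht
    have hub : u t ^ β ≤ u t + u t ^ α := by
      rcases eq_or_lt_of_le hu with h0 | h0
      · rw [← h0, Real.zero_rpow (by linarith : β ≠ 0), Real.zero_rpow (ne_of_gt hα)]
        norm_num
      · rcases le_or_gt (u t) 1 with h1 | h1
        · have h2 := Real.rpow_le_rpow_of_exponent_ge h0 h1 hαβ.le
          linarith
        · have h2 : u t ^ β ≤ u t ^ (1:ℝ) := Real.rpow_le_rpow_of_exponent_le h1.le hβ
          rw [Real.rpow_one] at h2
          have h3 : (0:ℝ) ≤ u t ^ α := Real.rpow_nonneg hu α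
          linarith
    have hb := hb_nonneg t ht
    have hh := h t ht
    nlinarith [mul_le_mul_of_nonneg_left hub hb]
  refine ⟨part1, ?_⟩
  intro T hT
  have hCBcont : ContinuousOn (fun s => c s + b s) (Set.Icc (0:ℝ) T) :=
    (hc_cont.add hb_cont).mono Set.Icc_subset_Ici_self
  have hABcont : ContinuousOn (fun s => a s + b s) (Set.Icc (0:ℝ) T) :=
    (ha_cont.add hb_cont).mono Set.Icc_subset_Ici_self
  have key : ∀ ε : ℝ, 0 < ε →
      (u T ^ 2 + ε ^ 2) ^ ((1 - α)/2)
        ≤ (u 0 ^ 2 + ε ^ 2) ^ ((1 - α)/2) * Real.exp ((1 - α) * ∫ s in (0:ℝ)..T, (c s + b s))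
          + ∫ s in (0:ℝ)..T, (1 - α) * (a s + b s)
              * Real.exp ((1 - α) * ∫ r in s..T, (c r + b r)) := by
    intro ε hε
    set g : ℝ → ℝ := fun s => (u s ^ 2 + ε ^ 2) ^ ((1 - α)/2) with hgdef
    set g' : ℝ → ℝ :=
      fun s => (2 * u s * u' s) * ((1 - α)/2) * (u s ^ 2 + ε ^ 2) ^ ((1 - α)/2 - 1) with hg'def
    have hQpos : ∀ s : ℝ, 0 < u s ^ 2 + ε ^ 2 := fun s => by positivity
    have hg' : ∀ s ∈ Set.Icc (0:ℝ) T, HasDerivAt g (g' s) s := by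
      intro s hs
      have h1 : HasDerivAt (fun s => u s ^ 2 + ε ^ 2) (2 * u s * u' s) s := by
        have h2 : HasDerivAt (fun x => u x ^ 2 + ε ^ 2) (((2:ℕ):ℝ) * u s ^ (2 - 1) * u' s) s :=
          ((hderiv s hs.1).fun_pow 2).add_const (ε ^ 2)
        convert h2 using 1
        push_cast
        ring
      have h3 := h1.rpow_const (p := (1 - α)/2) (Or.inl (ne_of_gt (hQpos s)))
      exact h3
    have hle : ∀ s ∈ Set.Ioo (0:ℝ) T,
        g' s ≤ (fun s => (1 - α) * (c s + b s)) s * g s + (fun s => (1 - α) * (a s + b s)) s := by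
      intro s hs
      have hs0 : (0:ℝ) ≤ s := hs.1.le
      have hu := hu_nonneg s hs0
      have hQ := hQpos s
      have hP : (0:ℝ) < (u s ^ 2 + ε ^ 2) ^ ((1 - α)/2 - 1) := Real.rpow_pos_of_pos hQ _
      have hgpos : (0:ℝ) < (u s ^ 2 + ε ^ 2) ^ ((1 - α)/2) := Real.rpow_pos_of_pos hQ _
      have hcb : (0:ℝ) ≤ c s + b s := add_nonneg (hc_nonneg s hs0) (hb_nonneg s hs0)
      have hab : (0:ℝ) ≤ a s + b s := add_nonneg (ha_nonneg s hs0) (hb_nonneg s hs0)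
      show (2 * u s * u' s) * ((1 - α)/2) * (u s ^ 2 + ε ^ 2) ^ ((1 - α)/2 - 1)
        ≤ (1 - α) * (c s + b s) * ((u s ^ 2 + ε ^ 2) ^ ((1 - α)/2)) + (1 - α) * (a s + b s)
      rcases le_or_gt (u' s) 0 with hus | hus
      · have hL1 : 2 * u s * u' s ≤ 0 := by nlinarith
        have hL2 : (2 * u s * u' s) * ((1 - α)/2) ≤ 0 :=
          mul_nonpos_of_nonpos_of_nonneg hL1 (by linarith)
        have hL3 : (2 * u s * u' s) * ((1 - α)/2) * (u s ^ 2 + ε ^ 2) ^ ((1 - α)/2 - 1) ≤ 0 :=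
          mul_nonpos_of_nonpos_of_nonneg hL2 hP.le
        have hR1 : (0:ℝ) ≤ (1 - α) * (c s + b s) * ((u s ^ 2 + ε ^ 2) ^ ((1 - α)/2)) :=
          mul_nonneg (mul_nonneg (by linarith) hcb) hgpos.le
        have hR2 : (0:ℝ) ≤ (1 - α) * (a s + b s) := mul_nonneg (by linarith) hab
        linarith
      · have hu' : u' s ≤ (c s + b s) * u s + (a s + b s) * u s ^ α := part1 s hs0
        have huQ : u s ≤ (u s ^ 2 + ε ^ 2) ^ (1/2 : ℝ) := by
          have h1 : (u s ^ 2 : ℝ) ≤ u s ^ 2 + ε ^ 2 := by nlinarith [sq_nonneg ε]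
          have h2 : ((u s ^ 2 : ℝ)) ^ (1/2 : ℝ) ≤ (u s ^ 2 + ε ^ 2) ^ (1/2 : ℝ) :=
            Real.rpow_le_rpow (by positivity) h1 (by norm_num)
          calc u s = (u s ^ 2) ^ (1/2 : ℝ) := by
                rw [← Real.rpow_natCast (u s) 2, ← Real.rpow_mul hu]
                norm_num
            _ ≤ _ := h2
        have huα : u s ^ α ≤ (u s ^ 2 + ε ^ 2) ^ (α/2) := by
          calc u s ^ α ≤ ((u s ^ 2 + ε ^ 2) ^ (1/2 : ℝ)) ^ α :=
                Real.rpow_le_rpow hu huQ hα.le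
            _ = (u s ^ 2 + ε ^ 2) ^ (α/2) := by
                rw [← Real.rpow_mul hQ.le]
                congr 1
                ring
        have key1 : u s * u s * (u s ^ 2 + ε ^ 2) ^ ((1 - α)/2 - 1)
            ≤ (u s ^ 2 + ε ^ 2) ^ ((1 - α)/2) := by
          have h1 : u s * u s ≤ u s ^ 2 + ε ^ 2 := by nlinarith [sq_nonneg ε]
          have h2 := mul_le_mul_of_nonneg_right h1 hP.le
          have h3 : (u s ^ 2 + ε ^ 2) * (u s ^ 2 + ε ^ 2) ^ ((1 - α)/2 - 1)
              = (u s ^ 2 + ε ^ 2) ^ ((1 - α)/2) := by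
            nth_rewrite 1 [← Real.rpow_one (u s ^ 2 + ε ^ 2)]
            rw [← Real.rpow_add hQ]
            congr 1
            ring
          linarith [h2, h3.le, h3.ge]
        have key2 : u s * u s ^ α * (u s ^ 2 + ε ^ 2) ^ ((1 - α)/2 - 1) ≤ 1 := by
          have h1 : u s * u s ^ α
              ≤ (u s ^ 2 + ε ^ 2) ^ (1/2 : ℝ) * (u s ^ 2 + ε ^ 2) ^ (α/2) :=
            mul_le_mul huQ huα (Real.rpow_nonneg hu α) (Real.rpow_nonneg hQ.le _)
          have h2 := mul_le_mul_of_nonneg_right h1 hP.le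
          have h3 : (u s ^ 2 + ε ^ 2) ^ (1/2 : ℝ) * (u s ^ 2 + ε ^ 2) ^ (α/2)
              * (u s ^ 2 + ε ^ 2) ^ ((1 - α)/2 - 1) = 1 := by
            rw [← Real.rpow_add hQ, ← Real.rpow_add hQ]
            rw [show (1/2 : ℝ) + α/2 + ((1 - α)/2 - 1) = 0 by ring, Real.rpow_zero]
          linarith [h2, h3.le, h3.ge]
        have step1 : (2 * u s * u' s) * ((1 - α)/2) * (u s ^ 2 + ε ^ 2) ^ ((1 - α)/2 - 1)
            = ((1 - α) * (u s * (u s ^ 2 + ε ^ 2) ^ ((1 - α)/2 - 1))) * u' s := by ring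
        have hfac : (0:ℝ) ≤ (1 - α) * (u s * (u s ^ 2 + ε ^ 2) ^ ((1 - α)/2 - 1)) :=
          mul_nonneg (by linarith) (mul_nonneg hu hP.le)
        have step2 := mul_le_mul_of_nonneg_left hu' hfac
        have step3 : ((1 - α) * (u s * (u s ^ 2 + ε ^ 2) ^ ((1 - α)/2 - 1)))
              * ((c s + b s) * u s + (a s + b s) * u s ^ α)
            = (1 - α) * (c s + b s) * (u s * u s * (u s ^ 2 + ε ^ 2) ^ ((1 - α)/2 - 1))
              + (1 - α) * (a s + b s)
                * (u s * u s ^ α * (u s ^ 2 + ε ^ 2) ^ ((1 - α)/2 - 1)) := by ring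
        have step4 := mul_le_mul_of_nonneg_left key1
          (mul_nonneg (by linarith : (0:ℝ) ≤ 1 - α) hcb)
        have step5 := mul_le_mul_of_nonneg_left key2
          (mul_nonneg (by linarith : (0:ℝ) ≤ 1 - α) hab)
        calc (2 * u s * u' s) * ((1 - α)/2) * (u s ^ 2 + ε ^ 2) ^ ((1 - α)/2 - 1)
            = ((1 - α) * (u s * (u s ^ 2 + ε ^ 2) ^ ((1 - α)/2 - 1))) * u' s := step1
          _ ≤ ((1 - α) * (u s * (u s ^ 2 + ε ^ 2) ^ ((1 - α)/2 - 1)))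
              * ((c s + b s) * u s + (a s + b s) * u s ^ α) := step2
          _ = (1 - α) * (c s + b s) * (u s * u s * (u s ^ 2 + ε ^ 2) ^ ((1 - α)/2 - 1))
              + (1 - α) * (a s + b s)
                * (u s * u s ^ α * (u s ^ 2 + ε ^ 2) ^ ((1 - α)/2 - 1)) := step3
          _ ≤ (1 - α) * (c s + b s) * ((u s ^ 2 + ε ^ 2) ^ ((1 - α)/2))
              + (1 - α) * (a s + b s) * 1 := add_le_add step4 step5
          _ = (1 - α) * (c s + b s) * ((u s ^ 2 + ε ^ 2) ^ ((1 - α)/2))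
              + (1 - α) * (a s + b s) := by ring
    have haux := gronwall_lin_aux g g' (fun s => (1 - α) * (c s + b s))
      (fun s => (1 - α) * (a s + b s)) T hT hg'
      (continuousOn_const.mul hCBcont) (continuousOn_const.mul hABcont) hle
    simp only [intervalIntegral.integral_const_mul] at haux
    exact haux
  -- limit ε → 0
  have huT := hu_nonneg T hT
  have hu0 := hu_nonneg 0 le_rfl
  have hmono : ∀ ε : ℝ, 0 < ε →
      u T ^ (1 - α) ≤ (u T ^ 2 + ε ^ 2) ^ ((1 - α)/2) := by
    intro ε hε
    have huTeq : ((u T ^ 2 : ℝ)) ^ ((1 - α)/2) = u T ^ (1 - α) := by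
      rw [← Real.rpow_natCast (u T) 2, ← Real.rpow_mul huT]
      congr 1
      push_cast
      ring
    rw [← huTeq]
    exact Real.rpow_le_rpow (by positivity) (by nlinarith [sq_nonneg ε]) (by linarith)
  have hfinal : u T ^ (1 - α)
      ≤ u 0 ^ (1 - α) * Real.exp ((1 - α) * ∫ s in (0:ℝ)..T, (c s + b s))
        + ∫ s in (0:ℝ)..T, (1 - α) * (a s + b s)
            * Real.exp ((1 - α) * ∫ r in s..T, (c r + b r)) := by
    set K := Real.exp ((1 - α) * ∫ s in (0:ℝ)..T, (c s + b s)) with hK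
    set IR := ∫ s in (0:ℝ)..T, (1 - α) * (a s + b s)
        * Real.exp ((1 - α) * ∫ r in s..T, (c r + b r)) with hIR
    have hca : ContinuousAt (fun ε : ℝ => (u 0 ^ 2 + ε ^ 2) ^ ((1 - α)/2) * K + IR) 0 := by
      have h1 : ContinuousAt (fun ε : ℝ => u 0 ^ 2 + ε ^ 2) 0 := by fun_prop
      exact ((h1.rpow_const (Or.inr (by linarith))).mul continuousAt_const).add continuousAt_const
    have htend : Filter.Tendsto (fun ε : ℝ => (u 0 ^ 2 + ε ^ 2) ^ ((1 - α)/2) * K + IR)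
        (nhdsWithin 0 (Set.Ioi 0)) (nhds ((u 0 ^ 2 + (0:ℝ) ^ 2) ^ ((1 - α)/2) * K + IR)) :=
      hca.tendsto.mono_left nhdsWithin_le_nhds
    have hev : ∀ᶠ ε in nhdsWithin (0:ℝ) (Set.Ioi 0),
        u T ^ (1 - α) ≤ (u 0 ^ 2 + ε ^ 2) ^ ((1 - α)/2) * K + IR :=
      eventually_mem_nhdsWithin.mono (fun ε hε => (hmono ε hε).trans (key ε hε))
    have hle0 := ge_of_tendsto htend hev
    have hf0 : ((u 0 ^ 2 + (0:ℝ) ^ 2)) ^ ((1 - α)/2) = u 0 ^ (1 - α) := by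
      norm_num
      rw [← Real.rpow_natCast (u 0) 2, ← Real.rpow_mul hu0]
      congr 1
      push_cast
      ring
    rw [hf0] at hle0
    exact hle0
  have hXnn : (0:ℝ) ≤ u 0 ^ (1 - α) * Real.exp ((1 - α) * ∫ s in (0:ℝ)..T, (c s + b s))
      + ∫ s in (0:ℝ)..T, (1 - α) * (a s + b s)
          * Real.exp ((1 - α) * ∫ r in s..T, (c r + b r)) :=
    le_trans (Real.rpow_nonneg huT _) hfinal
  have hEq : (u T ^ (1 - α)) ^ (1/(1 - α)) = u T := by
    rw [← Real.rpow_mul huT, mul_one_div, div_self (by linarith : (1:ℝ) - α ≠ 0),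
      Real.rpow_one]
  have hmain := Real.rpow_le_rpow (Real.rpow_nonneg huT (1 - α)) hfinal
    (le_of_lt (one_div_pos.mpr (by linarith : (0:ℝ) < 1 - α)))
  rwa [hEq] at hmain
end

section
/- With V₁(Y) = (1/B)Σᵢ |y^i − ȳ|² and F(Y) the ALDI drift F(Y)_i = −Cov(Y)·P·(y^i − y*) + ((D+1)/B)(y^i − ȳ), where Cov(Y) = (1/B)Σᵢ (y^i−ȳ)(y^i−ȳ)ᵀ and P is symmetric positive semidefinite, one has ∇V₁(Y)·F(Y) ≤ (2(D+1)/B)·V₁(Y). -/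
open Finset Matrix

theorem stmt_14 (D B : ℕ) (hB : 0 < B) (y : Fin B → Fin D → ℝ) (ystar : Fin D → ℝ)
    (P : Matrix (Fin D) (Fin D) ℝ) (hP : P.PosSemidef)
    (ybar : Fin D → ℝ) (hybar : ybar = fun j => (1 / (B : ℝ)) * ∑ k, y k j)
    (Cov : Matrix (Fin D) (Fin D) ℝ)
    (hCov : Cov = Matrix.of fun i j =>
      (1 / (B : ℝ)) * ∑ k, (y k i - ybar i) * (y k j - ybar j))
    (F : Fin B → Fin D → ℝ)
    (hF : F = fun i =>
      -Cov.mulVec (P.mulVec (y i - ystar)) + (((D : ℝ) + 1) / B) • (y i - ybar)) :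
    ∑ i, ((2 / (B : ℝ)) • (y i - ybar)) ⬝ᵥ F i
      ≤ (2 * ((D : ℝ) + 1) / B) * ((1 / (B : ℝ)) * ∑ i, ∑ j, (y i j - ybar j) ^ 2) := by
  have hBne : (B : ℝ) ≠ 0 := Nat.cast_ne_zero.mpr hB.ne'
  set v : Fin B → Fin D → ℝ := fun i j => y i j - ybar j with hv
  -- sum of deviations is zero
  have hsum0 : ∀ j, ∑ i, v i j = 0 := by
    intro j
    simp only [hv, Finset.sum_sub_distrib, Finset.sum_const, Finset.card_univ,
      Fintype.card_fin, nsmul_eq_mul, hybar]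
    field_simp
    ring
  -- Cov symmetric
  have hCovsymm : Covᵀ = Cov := by
    rw [hCov]; ext a b
    simp [Matrix.transpose_apply, mul_comm]
  -- Cov * P * Cov is PSD
  have hpsd : (Cov * P * Cov).PosSemidef := by
    have := hP.conjTranspose_mul_mul_same Cov
    rwa [Matrix.conjTranspose_eq_transpose_of_trivial, hCovsymm] at this
  have htr : 0 ≤ (Cov * P * Cov).trace := by
    rw [Matrix.trace]
    apply Finset.sum_nonneg
    intro a _
    have := hpsd.dotProduct_mulVec_nonneg (Pi.single a 1)
    simpa [Matrix.mulVec, dotProduct, Pi.single_apply] using this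
  -- linearity split of the drift argument
  have hsplit : ∀ i, Cov.mulVec (P.mulVec (y i - ystar))
      = Cov.mulVec (P.mulVec (v i)) + Cov.mulVec (P.mulVec (fun j => ybar j - ystar j)) := by
    intro i
    have h : (y i - ystar) = (v i) + (fun j => ybar j - ystar j) := by
      funext j
      simp only [hv, Pi.add_apply, Pi.sub_apply]
      ring
    rw [h, Matrix.mulVec_add, Matrix.mulVec_add]
  -- the constant part contributes zero
  have hconst : ∀ c : Fin D → ℝ, ∑ i, (v i) ⬝ᵥ c = 0 := by
    intro c
    simp only [dotProduct]
    rw [Finset.sum_comm]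
    simp only [← Finset.sum_mul, hsum0, zero_mul, Finset.sum_const_zero]
  -- key identity: sum of quadratic forms equals B * trace
  have key : ∑ i, (v i) ⬝ᵥ Cov.mulVec (P.mulVec (v i)) = (B : ℝ) * (Cov * P * Cov).trace := by
    have hCv : ∀ a c : Fin D, ∑ i, v i a * v i c = (B : ℝ) * Cov c a := by
      intro a c
      rw [hCov]
      simp only [Matrix.of_apply]
      rw [← mul_assoc, mul_one_div_cancel hBne, one_mul]
      exact Finset.sum_congr rfl fun i _ => mul_comm _ _
    simp only [dotProduct, Matrix.mulVec, Matrix.trace, Matrix.diag, Matrix.mul_apply,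
      Finset.mul_sum, Finset.sum_mul]
    rw [Finset.sum_comm]
    trans ∑ a, ∑ b, ∑ c, Cov a b * (P b c * ((B : ℝ) * Cov c a))
    · refine Finset.sum_congr rfl fun a _ => ?_
      rw [Finset.sum_comm]
      refine Finset.sum_congr rfl fun b _ => ?_
      rw [Finset.sum_comm]
      refine Finset.sum_congr rfl fun c _ => ?_
      rw [← hCv a c, Finset.mul_sum, Finset.mul_sum]
      exact Finset.sum_congr rfl fun i _ => by ring
    · rw [Finset.sum_congr rfl fun a _ => Finset.sum_comm]
      exact Finset.sum_congr rfl fun a _ => Finset.sum_congr rfl fun c _ =>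
        Finset.sum_congr rfl fun b _ => by ring
  have hvy : ∀ i, y i - ybar = v i := fun i => rfl
  have step : ∀ i, ((2 / (B : ℝ)) • (y i - ybar)) ⬝ᵥ F i
      = -((2 / (B : ℝ)) * (v i ⬝ᵥ Cov.mulVec (P.mulVec (v i))))
        - (2 / (B : ℝ)) * (v i ⬝ᵥ Cov.mulVec (P.mulVec (fun j => ybar j - ystar j)))
        + (2 * ((D : ℝ) + 1) / B) * ((1 / (B : ℝ)) * ∑ j, (y i j - ybar j) ^ 2) := by
    intro i
    rw [hF]
    simp only [hvy, hsplit i, smul_dotProduct, dotProduct_add, dotProduct_neg,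
      dotProduct_smul, smul_eq_mul]
    have hsq : ∑ j, (y i j - ybar j) ^ 2 = v i ⬝ᵥ v i := by
      simp [dotProduct, hv, sq]
    rw [hsq]
    field_simp
    ring
  rw [Finset.sum_congr rfl fun i _ => step i]
  simp only [Finset.sum_add_distrib, Finset.sum_sub_distrib, Finset.sum_neg_distrib,
    ← Finset.mul_sum]
  rw [key, hconst]
  have h1 : 0 ≤ (2 / (B : ℝ)) * ((B : ℝ) * (Cov * P * Cov).trace) := by
    have hBpos : (0 : ℝ) < B := Nat.cast_pos.mpr hB
    positivity
  linarith
end
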